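/- (Blackwell's theorem for random variables.) Let S, X₁, X₂ be finite sets, let p be a probability distribution on S with full support (p s > 0 for all s), and let κ₁, κ₂ be channels from S to X₁ and from S to X₂. Then κ₁ is a garbling of κ₂ if and only if for every finite action set A and every utility function u : A × S → ℝ, the optimal expected utilities satisfy U(p,u,κ₁) ≤ U(p,u,κ₂). (In contrast to Blackwell's theorem, the input distribution p is fixed and only the utility function varies.) -/

import Mathlib

open Finset

/-- A probability distribution on a finite set. -/
def IsDist {S : Type} [Fintype S] (p : S → ℝ) : Prop :=
  (∀ s, 0 ≤ p s) ∧ ∑ s, p s = 1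

/-- A channel from `S` to `X`: a column-stochastic matrix. -/
def IsChannel {S X : Type} [Fintype S] [Fintype X] (κ : X → S → ℝ) : Prop :=
  (∀ x s, 0 ≤ κ x s) ∧ ∀ s, ∑ x, κ x s = 1

/-- `κ₁` is a garbling of `κ₂` (the Blackwell order `κ₁ ⪯ κ₂`). -/
def IsGarbling {S X₁ X₂ : Type} [Fintype S] [Fintype X₁] [Fintype X₂]
    (κ₁ : X₁ → S → ℝ) (κ₂ : X₂ → S → ℝ) : Prop :=
  ∃ lam : X₁ → X₂ → ℝ, IsChannel lam ∧ ∀ x₁ s, κ₁ x₁ s = ∑ x₂, lam x₁ x₂ * κ₂ x₂ s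

/-- Optimal expected utility: maximum over decision rules `d : X → A`. -/
noncomputable def optUtility {S X A : Type} [Fintype S] [Fintype X] [Fintype A]
    (p : S → ℝ) (u : A × S → ℝ) (κ : X → S → ℝ) : ℝ :=
  ⨆ d : X → A, ∑ s, ∑ x, p s * κ x s * u (d x, s)

/-- Mutual information between input (with distribution `p`) and output of channel `κ`;
terms with `κ x s = 0` are taken to be `0`. -/
noncomputable def mutualInfo {S X : Type} [Fintype S] [Fintype X]
    (p : S → ℝ) (κ : X → S → ℝ) : ℝ :=
  ∑ s, ∑ x, if κ x s = 0 then 0 else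
    p s * κ x s * Real.log (κ x s / ∑ s', p s' * κ x s')

/-- Channel composition: `(κ·λ) x s = ∑ t, κ x t * λ t s`. -/
def chanComp {S T X : Type} [Fintype S] [Fintype T] [Fintype X]
    (κ : X → T → ℝ) (lam : T → S → ℝ) : X → S → ℝ :=
  fun x s => ∑ t, κ x t * lam t s

/-- Marginal on `S` of a joint distribution on `S × X₁ × X₂`. -/
noncomputable def margS3 {S X₁ X₂ : Type} [Fintype S] [Fintype X₁] [Fintype X₂]
    (P : S × X₁ × X₂ → ℝ) (s : S) : ℝ := ∑ x₁, ∑ x₂, P (s, x₁, x₂)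

/-- The channel `X₁ ← S` of conditional probabilities `P(X₁ = x₁ | S = s)`. -/
noncomputable def chan1of3 {S X₁ X₂ : Type} [Fintype S] [Fintype X₁] [Fintype X₂]
    (P : S × X₁ × X₂ → ℝ) (x₁ : X₁) (s : S) : ℝ :=
  (∑ x₂, P (s, x₁, x₂)) / margS3 P s

/-- The channel `X₂ ← S` of conditional probabilities `P(X₂ = x₂ | S = s)`. -/
noncomputable def chan2of3 {S X₁ X₂ : Type} [Fintype S] [Fintype X₁] [Fintype X₂]
    (P : S × X₁ × X₂ → ℝ) (x₂ : X₂) (s : S) : ℝ :=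
  (∑ x₁, P (s, x₁, x₂)) / margS3 P s

/-- Pushforward of a joint distribution on `S × X₁ × X₂` along `f : S → S'`. -/
noncomputable def push3 {S S' X₁ X₂ : Type} [Fintype S] [Fintype X₁] [Fintype X₂]
    [DecidableEq S'] (f : S → S') (P : S × X₁ × X₂ → ℝ) : S' × X₁ × X₂ → ℝ :=
  fun q => ∑ s ∈ Finset.univ.filter (fun s => f s = q.1), P (s, q.2.1, q.2.2)

/-- Blackwell's theorem for random variables: for a fixed input
distribution `p` with full support, `κ₁` is a garbling of `κ₂` if and only if
for every finite action set and every utility function the optimal expected utility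
of `κ₁` is at most that of `κ₂`. -/
private lemma le_optUtility' {S X A : Type} [Fintype S] [Fintype X] [Fintype A]
    (p : S → ℝ) (u : A × S → ℝ) (κ : X → S → ℝ) (d : X → A) :
    ∑ s, ∑ x, p s * κ x s * u (d x, s) ≤
      ⨆ d : X → A, ∑ s, ∑ x, p s * κ x s * u (d x, s) :=
  le_ciSup (Set.Finite.bddAbove (Set.finite_range (fun d : X → A => ∑ s, ∑ x, p s * κ x s * u (d x, s)))) d

private lemma optUtility_le' {S X A : Type} [Fintype S] [Fintype X] [Fintype A] [Nonempty A]
    (p : S → ℝ) (u : A × S → ℝ) (κ : X → S → ℝ) {b : ℝ}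
    (h : ∀ d : X → A, ∑ s, ∑ x, p s * κ x s * u (d x, s) ≤ b) :
    (⨆ d : X → A, ∑ s, ∑ x, p s * κ x s * u (d x, s)) ≤ b :=
  ciSup_le h

private lemma forward_dir {S X₁ X₂ : Type} [Fintype S] [Fintype X₁] [Fintype X₂]
    (κ₁ : X₁ → S → ℝ) (κ₂ : X₂ → S → ℝ)
    (p : S → ℝ) (hX1 : Nonempty X₁)
    (hg : IsGarbling κ₁ κ₂)
    (A : Type) [Fintype A] [Nonempty A] (u : A × S → ℝ) :
    optUtility p u κ₁ ≤ optUtility p u κ₂ := by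
  obtain ⟨lam, hlam, hid⟩ := hg
  apply optUtility_le'
  intro d
  set F : X₂ → X₁ → ℝ := fun x₂ x₁ => ∑ s, p s * κ₂ x₂ s * u (d x₁, s) with hF
  have : ∀ x₂ : X₂, ∃ x₁ : X₁, ∀ y : X₁, F x₂ y ≤ F x₂ x₁ := fun x₂ => Finite.exists_max _
  choose g hgmax using this
  have key : ∑ s, ∑ x, p s * κ₁ x s * u (d x, s)
      = ∑ x₂, ∑ x₁, lam x₁ x₂ * F x₂ x₁ := by
    have : ∀ s, ∀ x₁ : X₁, p s * κ₁ x₁ s * u (d x₁, s)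
        = ∑ x₂, lam x₁ x₂ * (p s * κ₂ x₂ s * u (d x₁, s)) := by
      intro s x₁
      rw [hid, Finset.mul_sum, Finset.sum_mul]
      exact Finset.sum_congr rfl fun x₂ _ => by ring
    simp only [this]
    calc ∑ s, ∑ x₁, ∑ x₂, lam x₁ x₂ * (p s * κ₂ x₂ s * u (d x₁, s))
        = ∑ x₁, ∑ s, ∑ x₂, lam x₁ x₂ * (p s * κ₂ x₂ s * u (d x₁, s)) := Finset.sum_comm
      _ = ∑ x₁, ∑ x₂, ∑ s, lam x₁ x₂ * (p s * κ₂ x₂ s * u (d x₁, s)) :=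
          Finset.sum_congr rfl fun x₁ _ => Finset.sum_comm
      _ = ∑ x₂, ∑ x₁, ∑ s, lam x₁ x₂ * (p s * κ₂ x₂ s * u (d x₁, s)) := Finset.sum_comm
      _ = ∑ x₂, ∑ x₁, lam x₁ x₂ * F x₂ x₁ := by
          refine Finset.sum_congr rfl fun x₂ _ => Finset.sum_congr rfl fun x₁ _ => ?_
          rw [hF, Finset.mul_sum]
  rw [key]
  have step2 : ∑ x₂, ∑ x₁, lam x₁ x₂ * F x₂ x₁ ≤ ∑ x₂, F x₂ (g x₂) := by
    refine Finset.sum_le_sum fun x₂ _ => ?_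
    calc ∑ x₁, lam x₁ x₂ * F x₂ x₁ ≤ ∑ x₁, lam x₁ x₂ * F x₂ (g x₂) :=
          Finset.sum_le_sum fun x₁ _ =>
            mul_le_mul_of_nonneg_left (hgmax x₂ x₁) (hlam.1 x₁ x₂)
      _ = (∑ x₁, lam x₁ x₂) * F x₂ (g x₂) := (Finset.sum_mul ..).symm
      _ = F x₂ (g x₂) := by rw [hlam.2 x₂, one_mul]
  refine step2.trans ?_
  have : ∑ x₂, F x₂ (g x₂) = ∑ s, ∑ x₂, p s * κ₂ x₂ s * u ((d ∘ g) x₂, s) := by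
    rw [Finset.sum_comm]; rfl
  rw [this]
  exact le_optUtility' p u κ₂ (d ∘ g)

private lemma reverse_dir {S X₁ X₂ : Type} [Fintype S] [Fintype X₁] [Fintype X₂]
    (κ₁ : X₁ → S → ℝ) (κ₂ : X₂ → S → ℝ) (hX1 : Nonempty X₁)
    (p : S → ℝ) (hfull : ∀ s, 0 < p s)
    (hU : ∀ (A : Type) [Fintype A] [Nonempty A] (u : A × S → ℝ),
        optUtility p u κ₁ ≤ optUtility p u κ₂) :
    IsGarbling κ₁ κ₂ := by
  classical
  by_contra hng
  let T : (X₁ → X₂ → ℝ) →ₗ[ℝ] ((X₁ × S) → ℝ) :=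
    { toFun := fun l q => ∑ x₂, l q.1 x₂ * κ₂ x₂ q.2
      map_add' := by intro a b; funext q; simp [add_mul, Finset.sum_add_distrib]
      map_smul' := by intro r a; funext q; simp [Finset.mul_sum, mul_assoc] }
  set Λ : Set (X₁ → X₂ → ℝ) := {l | IsChannel l} with hΛ
  have hΛconv : Convex ℝ Λ := by
    intro a ha b hb s t hs ht hst
    refine ⟨fun x x₂ => ?_, fun x₂ => ?_⟩
    · have h1 := ha.1 x x₂
      have h2 := hb.1 x x₂
      simp only [Pi.add_apply, Pi.smul_apply, smul_eq_mul]
      nlinarith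
    · simp only [Pi.add_apply, Pi.smul_apply, smul_eq_mul]
      rw [Finset.sum_add_distrib, ← Finset.mul_sum, ← Finset.mul_sum, ha.2 x₂, hb.2 x₂]
      linarith
  have hΛclosed : IsClosed Λ := by
    have h1 : IsClosed {l : X₁ → X₂ → ℝ | ∀ x x₂, 0 ≤ l x x₂} := by
      have he : {l : X₁ → X₂ → ℝ | ∀ x x₂, 0 ≤ l x x₂}
          = ⋂ x, ⋂ x₂, {l : X₁ → X₂ → ℝ | 0 ≤ l x x₂} := by ext l; simp
      rw [he]
      exact isClosed_iInter fun x => isClosed_iInter fun x₂ =>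
        isClosed_le continuous_const ((continuous_apply x₂).comp (continuous_apply x))
    have h2 : IsClosed {l : X₁ → X₂ → ℝ | ∀ x₂, ∑ x, l x x₂ = 1} := by
      have he : {l : X₁ → X₂ → ℝ | ∀ x₂, ∑ x, l x x₂ = 1}
          = ⋂ x₂, {l : X₁ → X₂ → ℝ | ∑ x, l x x₂ = 1} := by ext l; simp
      rw [he]
      refine isClosed_iInter fun x₂ => isClosed_eq ?_ continuous_const
      exact continuous_finset_sum _ fun x _ => (continuous_apply x₂).comp (continuous_apply x)
    have he : Λ = {l : X₁ → X₂ → ℝ | ∀ x x₂, 0 ≤ l x x₂}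
        ∩ {l : X₁ → X₂ → ℝ | ∀ x₂, ∑ x, l x x₂ = 1} := by
      ext l; exact Iff.rfl
    rw [he]; exact h1.inter h2
  have hΛcomp : IsCompact Λ := by
    have hsub : Λ ⊆ Set.univ.pi fun _ : X₁ => Set.univ.pi fun _ : X₂ => Set.Icc (0:ℝ) 1 := by
      intro l hl x _ 
      intro x₂ _
      refine ⟨hl.1 x x₂, ?_⟩
      calc l x x₂ ≤ ∑ y, l y x₂ := Finset.single_le_sum (fun y _ => hl.1 y x₂) (Finset.mem_univ x)
        _ = 1 := hl.2 x₂
    exact (isCompact_univ_pi fun _ => isCompact_univ_pi fun _ => isCompact_Icc).of_isClosed_subset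
      hΛclosed hsub
  have hTc : Continuous T := T.continuous_of_finiteDimensional
  set G : Set ((X₁ × S) → ℝ) := T '' Λ with hG
  have hGconv : Convex ℝ G := hΛconv.linear_image T
  have hGclosed : IsClosed G := (hΛcomp.image hTc).isClosed
  set m₁ : (X₁ × S) → ℝ := fun q => κ₁ q.1 q.2 with hm₁
  have hnot : m₁ ∉ G := by
    rintro ⟨l, hl, heq⟩
    exact hng ⟨l, hl, fun x s => (congrFun heq (x, s)).symm⟩
  obtain ⟨f, u0, hlt, hgt⟩ := geometric_hahn_banach_closed_point hGconv hGclosed hnot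
  set c : X₁ → S → ℝ := fun x s => f (Pi.single (x, s) (1:ℝ)) with hc
  have hrep : ∀ m : (X₁ × S) → ℝ, f m = ∑ q : X₁ × S, m q * c q.1 q.2 := by
    intro m
    have hm : m = ∑ q : X₁ × S, m q • (Pi.single q (1:ℝ) : (X₁ × S) → ℝ) := by
      funext r
      rw [Finset.sum_apply]
      simp [Pi.single_apply]
    calc f m = f (∑ q : X₁ × S, m q • (Pi.single q (1:ℝ) : (X₁ × S) → ℝ)) := by rw [← hm]
      _ = ∑ q : X₁ × S, m q * f (Pi.single q (1:ℝ)) := by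
          rw [map_sum]
          exact Finset.sum_congr rfl fun q _ => by rw [map_smul, smul_eq_mul]
      _ = ∑ q : X₁ × S, m q * c q.1 q.2 := by simp [hc]
  -- the utility function
  set u : X₁ × S → ℝ := fun as => c as.1 as.2 / p as.2 with hu
  have hlow : f m₁ ≤ optUtility p u κ₁ := by
    have h1 : ∑ s, ∑ x, p s * κ₁ x s * u (x, s) = f m₁ := by
      calc ∑ s, ∑ x, p s * κ₁ x s * u (x, s)
          = ∑ s, ∑ x, m₁ (x, s) * c x s := by
            refine Finset.sum_congr rfl fun s _ => Finset.sum_congr rfl fun x _ => ?_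
            have hps := (hfull s).ne'
            simp only [hu, hm₁]
            field_simp
        _ = ∑ x, ∑ s, m₁ (x, s) * c x s := Finset.sum_comm
        _ = ∑ q : X₁ × S, m₁ q * c q.1 q.2 :=
            (Fintype.sum_prod_type (fun q : X₁ × S => m₁ q * c q.1 q.2)).symm
        _ = f m₁ := (hrep m₁).symm
    rw [← h1]
    exact le_optUtility' p u κ₁ id
  have hhigh : optUtility p u κ₂ ≤ u0 := by
    apply optUtility_le'
    intro d
    set l : X₁ → X₂ → ℝ := fun x₁ x₂ => if d x₂ = x₁ then (1:ℝ) else 0 with hldef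
    have hl : IsChannel l := by
      constructor
      · intro x x₂; simp only [hldef]; positivity
      · intro x₂; simp [hldef]
    have hmem : T l ∈ G := ⟨l, hl, rfl⟩
    have hflt : f (T l) < u0 := hlt _ hmem
    have heval : ∑ s, ∑ x₂, p s * κ₂ x₂ s * u (d x₂, s) = f (T l) := by
      have hTq : ∀ q : X₁ × S, (T l) q = ∑ x₂, (if d x₂ = q.1 then (1:ℝ) else 0) * κ₂ x₂ q.2 :=
        fun q => rfl
      have h2 : f (T l) = ∑ x₁, ∑ s, (∑ x₂, (if d x₂ = x₁ then (1:ℝ) else 0) * κ₂ x₂ s) * c x₁ s := by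
        rw [hrep (T l),
          Fintype.sum_prod_type (fun q : X₁ × S => (T l) q * c q.1 q.2)]
        refine Finset.sum_congr rfl fun x₁ _ => Finset.sum_congr rfl fun s _ => ?_
        rw [hTq (x₁, s)]
      rw [h2]
      calc ∑ s, ∑ x₂, p s * κ₂ x₂ s * u (d x₂, s)
          = ∑ s, ∑ x₂, κ₂ x₂ s * c (d x₂) s := by
            refine Finset.sum_congr rfl fun s _ => Finset.sum_congr rfl fun x₂ _ => ?_
            have hps := (hfull s).ne'
            simp only [hu]
            field_simp
        _ = ∑ s, ∑ x₂, ∑ x₁, (if d x₂ = x₁ then (1:ℝ) else 0) * κ₂ x₂ s * c x₁ s := by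
            refine Finset.sum_congr rfl fun s _ => Finset.sum_congr rfl fun x₂ _ => ?_
            simp [ite_mul]
        _ = ∑ s, ∑ x₁, ∑ x₂, (if d x₂ = x₁ then (1:ℝ) else 0) * κ₂ x₂ s * c x₁ s :=
            Finset.sum_congr rfl fun s _ => Finset.sum_comm
        _ = ∑ x₁, ∑ s, ∑ x₂, (if d x₂ = x₁ then (1:ℝ) else 0) * κ₂ x₂ s * c x₁ s :=
            Finset.sum_comm
        _ = ∑ x₁, ∑ s, (∑ x₂, (if d x₂ = x₁ then (1:ℝ) else 0) * κ₂ x₂ s) * c x₁ s := by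
            refine Finset.sum_congr rfl fun x₁ _ => Finset.sum_congr rfl fun s _ => ?_
            rw [Finset.sum_mul]
    rw [heval]
    exact hflt.le
  have := hU X₁ u
  linarith [hgt]

theorem blackwell_fixed_input {S X₁ X₂ : Type} [Fintype S] [Fintype X₁] [Fintype X₂]
    (κ₁ : X₁ → S → ℝ) (κ₂ : X₂ → S → ℝ)
    (hκ₁ : IsChannel κ₁) (hκ₂ : IsChannel κ₂)
    (p : S → ℝ) (hp : IsDist p) (hfull : ∀ s, 0 < p s) :
    IsGarbling κ₁ κ₂ ↔
      (∀ (A : Type) [Fintype A] [Nonempty A] (u : A × S → ℝ),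
        optUtility p u κ₁ ≤ optUtility p u κ₂) := by
  have hS : Nonempty S := by
    by_contra h
    rw [not_nonempty_iff] at h
    have h2 := hp.2
    rw [Finset.univ_eq_empty, Finset.sum_empty] at h2
    norm_num at h2
  have hX1 : Nonempty X₁ := by
    by_contra h
    rw [not_nonempty_iff] at h
    obtain ⟨s⟩ := hS
    have h2 := hκ₁.2 s
    rw [Finset.univ_eq_empty, Finset.sum_empty] at h2
    norm_num at h2
  constructor
  · intro hg A _ _ u
    exact forward_dir κ₁ κ₂ p hX1 hg A u
  · intro hU
    exact reverse_dir κ₁ κ₂ hX1 p hfull hU
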